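/- Let μ be a nonempty Young diagram with |μ| cells. Then the number of standard Young tableaux of shape μ, multiplied by the product of the hook lengths of all cells of μ, equals |μ|!. (This is the Hook Length Formula: #SYT(μ) = |μ|!/∏_{(i,j)∈μ} h(i,j).) -/

import Mathlib

/-- The hook length of the cell `(i, j)` (row `i`, column `j`, `0`-indexed) of a Young
diagram `μ`: `h(i,j) = (μ_i - j) + (μ'_j - i) - 1`. -/
def hookLen (μ : YoungDiagram) (i j : ℕ) : ℕ :=
  (μ.rowLen i - j) + (μ.colLen j - i) - 1

/-- The number of standard Young tableaux of shape `μ`: bijective fillings of the cells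
of `μ` with the numbers `1, …, |μ|` that increase along each row and down each column
(fillings are normalized to be `0` outside `μ`). -/
noncomputable def sytCount (μ : YoungDiagram) : ℕ :=
  Nat.card {f : ℕ → ℕ → ℕ //
    (∀ i j, (i, j) ∉ μ → f i j = 0) ∧
    Set.BijOn (fun c : ℕ × ℕ => f c.1 c.2) ↑μ.cells (Set.Icc 1 μ.card) ∧
    (∀ i j₁ j₂, j₁ < j₂ → (i, j₂) ∈ μ → f i j₁ < f i j₂) ∧
    (∀ i₁ i₂ j, i₁ < i₂ → (i₂, j) ∈ μ → f i₁ j < f i₂ j)}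


open Polynomial Finset

namespace HLF

lemma esymm_cons (a : ℚ) (S : Multiset ℚ) (n : ℕ) :
    (a ::ₘ S).esymm (n+1) = S.esymm (n+1) + a * S.esymm n := by
  simp only [Multiset.esymm, Multiset.powersetCard_cons, Multiset.map_add, Multiset.sum_add,
    Multiset.map_map]
  congr 1
  rw [Multiset.sum_map_mul_left.symm]
  congr 1
  apply Multiset.map_congr rfl
  intro t _
  simp [Multiset.prod_cons]

lemma esymm_one' (S : Multiset ℚ) : S.esymm 1 = S.sum := by
  simp [Multiset.esymm, Multiset.powersetCard_one, Multiset.map_map]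

lemma esymm_two_shift (S : Multiset ℚ) :
    (S.map (· + 1)).esymm 2 = S.esymm 2 + ((Multiset.card S : ℚ) - 1) * S.sum
      + (Multiset.card S : ℚ) * ((Multiset.card S : ℚ) - 1) / 2 := by
  induction S using Multiset.induction with
  | empty => simp [Multiset.esymm]
  | cons a S ih =>
      rw [Multiset.map_cons]
      rw [show (2:ℕ) = 1 + 1 from rfl] at *
      rw [esymm_cons, esymm_cons, ih, esymm_one', esymm_one', Multiset.sum_map_add]
      simp only [Multiset.card_cons, Multiset.sum_cons, Multiset.map_const', Multiset.sum_replicate,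
        smul_eq_mul, mul_one, Nat.cast_add, Nat.cast_one, Multiset.map_id']
      ring

end HLF

namespace HLF
open Multiset in
lemma esymm_zero' (S : Multiset ℚ) : S.esymm 0 = 1 := by
  simp [Multiset.esymm]

lemma vieta_coeff (S : Multiset ℚ) {k : ℕ} (h : k ≤ Multiset.card S) :
    (S.map fun t => X - C t).prod.coeff k
      = (-1) ^ (Multiset.card S - k) * S.esymm (Multiset.card S - k) :=
  Multiset.prod_X_sub_C_coeff S h

theorem key_identity {ι : Type*} [DecidableEq ι] (s : Finset ι) (v : ι → ℚ)
    (hv : Set.InjOn v s) :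
    ∑ r ∈ s, v r * ∏ k ∈ s.erase r, ((v r - v k - 1) / (v r - v k))
      = (∑ r ∈ s, v r) - (#s : ℚ) * ((#s : ℚ) - 1) / 2 := by
  rcases Nat.lt_or_ge #s 2 with hm | hm
  · interval_cases h : #s
    · rw [Finset.card_eq_zero.mp h]; simp
    · obtain ⟨a, ha⟩ := Finset.card_eq_one.mp h
      subst ha; simp
  -- main case : m ≥ 2
  set m := #s with hmdef
  set S : Multiset ℚ := s.val.map v with hS
  have hcardS : Multiset.card S = m := by simp [hS, hmdef]
  set T : Multiset ℚ := S.map (· + 1) with hT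
  have hcardT : Multiset.card T = m := by simp [hT, hcardS]
  set g : ℚ[X] := (S.map fun t => X - C t).prod with hg
  set P : ℚ[X] := (T.map fun t => X - C t).prod with hP
  set Q : ℚ[X] := X * P with hQ
  set G : ℚ[X] := (X - C (m:ℚ)) * g with hG
  set D : ℚ[X] := Q - G with hD
  have hgfin : g = ∏ k ∈ s, (X - C (v k)) := by
    rw [hg, hS, Multiset.map_map]; exact Finset.prod_map_val s _
  have hPfin : P = ∏ k ∈ s, (X - C (v k + 1)) := by
    rw [hP, hT, hS, Multiset.map_map, Multiset.map_map]; exact Finset.prod_map_val s _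
  have hgdeg : g.natDegree = m := by
    rw [hg, Polynomial.natDegree_multiset_prod_of_monic]
    · simp [hcardS]
    · intro f hf; obtain ⟨a, _, rfl⟩ := Multiset.mem_map.mp hf
      exact Polynomial.monic_X_sub_C _
  have hPdeg : P.natDegree = m := by
    rw [hP, Polynomial.natDegree_multiset_prod_of_monic]
    · simp [hcardT]
    · intro f hf; obtain ⟨a, _, rfl⟩ := Multiset.mem_map.mp hf
      exact Polynomial.monic_X_sub_C _
  have hgmonic : g.Monic := by
    apply Polynomial.monic_multiset_prod_of_monic
    intro f hf; obtain ⟨a, _, rfl⟩ := Multiset.mem_map.mp hf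
    exact Polynomial.monic_X_sub_C _
  have hTsum : T.sum = S.sum + m := by
    rw [hT, Multiset.sum_map_add]
    simp [hcardS]
  -- coefficient computations
  have hgc : ∀ k ≤ m, g.coeff k = (-1)^(m-k) * S.esymm (m-k) := by
    intro k hk
    rw [hg, vieta_coeff S (hcardS ▸ hk), hcardS]
  have hPc : ∀ k ≤ m, P.coeff k = (-1)^(m-k) * T.esymm (m-k) := by
    intro k hk
    rw [hP, vieta_coeff T (hcardT ▸ hk), hcardT]
  have hDdeg : D.degree < (m : ℕ) := by
    rw [Polynomial.degree_lt_iff_coeff_zero]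
    intro k hk
    rw [hD, Polynomial.coeff_sub]
    rcases Nat.lt_or_ge (m+1) k with h2 | h2
    · -- k ≥ m + 2
      have hq : Q.natDegree < k := by
        have h1 : Q.natDegree ≤ (Polynomial.X : ℚ[X]).natDegree + P.natDegree :=
          Polynomial.natDegree_mul_le
        rw [Polynomial.natDegree_X, hPdeg] at h1
        omega
      have hG' : G.natDegree < k := by
        have h1 : G.natDegree ≤ (X - C (m:ℚ)).natDegree + g.natDegree :=
          Polynomial.natDegree_mul_le
        rw [Polynomial.natDegree_X_sub_C, hgdeg] at h1
        omega
      rw [Polynomial.coeff_eq_zero_of_natDegree_lt hq,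
        Polynomial.coeff_eq_zero_of_natDegree_lt hG', sub_zero]
    · -- k = m or m + 1
      have hQck : ∀ j, Q.coeff (j+1) = P.coeff j := by
        intro j; rw [hQ, Polynomial.coeff_X_mul]
      have hGc : ∀ j, G.coeff (j+1) = g.coeff j - (m:ℚ) * g.coeff (j+1) := by
        intro j
        rw [hG, sub_mul, Polynomial.coeff_sub, Polynomial.coeff_X_mul, Polynomial.coeff_C_mul]
      rcases (by omega : k = m ∨ k = m + 1) with rfl | rfl
      · -- k = m
        obtain ⟨j, hj⟩ : ∃ j, m = j + 1 := ⟨m-1, by omega⟩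
        rw [hj, hQck, hGc]
        rw [hPc j (by omega), hgc j (by omega), hgc (j+1) (by omega)]
        have e1 : m - j = 1 := by omega
        have e0 : m - (j+1) = 0 := by omega
        rw [e1, e0, esymm_zero', esymm_one', esymm_one', hTsum]
        push_cast
        ring
      · -- k = m + 1
        rw [hQck, hGc]
        rw [hPc m le_rfl, Polynomial.coeff_eq_zero_of_natDegree_lt (by omega : g.natDegree < m+1)]
        have hgm : g.coeff m = 1 := by
          have := hgmonic.coeff_natDegree
          rwa [hgdeg] at this
        rw [hgm]
        simp [esymm_zero']
  -- the key coefficient identity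
  have hDcoeff : D.coeff (m-1) = (m:ℚ)*((m:ℚ)-1)/2 - S.sum := by
    have hQc : Q.coeff (m-1) = P.coeff (m-2) := by
      rw [hQ, show m - 1 = (m-2) + 1 by omega, Polynomial.coeff_X_mul]
    rw [hD, Polynomial.coeff_sub, hQc, hPc (m-2) (by omega)]
    rw [hG, sub_mul, Polynomial.coeff_sub, show m - 1 = (m-2) + 1 by omega,
      Polynomial.coeff_X_mul, Polynomial.coeff_C_mul,
      hgc (m-2) (by omega), hgc ((m-2)+1) (by omega)]
    have e2 : m - (m-2) = 2 := by omega
    have e1 : m - ((m-2)+1) = 1 := by omega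
    rw [e2, e1, esymm_one']
    rw [hT, esymm_two_shift, hcardS]
    push_cast
    ring
  -- Lagrange interpolation
  have hDI : D = Lagrange.interpolate s v (fun i => D.eval (v i)) :=
    Lagrange.eq_interpolate hv (by rwa [← hmdef])
  have hbasis : ∀ i ∈ s, (Lagrange.basis s v i).coeff (m-1)
      = ∏ j ∈ s.erase i, (v i - v j)⁻¹ := by
    intro i hi
    have hcard : #(s.erase i) = m - 1 := by rw [Finset.card_erase_of_mem hi]
    rw [Lagrange.basis]
    have hco := Polynomial.coeff_prod_of_natDegree_le (s := s.erase i)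
      (f := fun j => Lagrange.basisDivisor (v i) (v j)) (n := 1) ?_
    · rw [hcard, mul_one] at hco
      rw [hco]
      apply Finset.prod_congr rfl
      intro j hj
      simp only [Lagrange.basisDivisor, Polynomial.coeff_C_mul]
      simp
    · intro j hj
      simp only [Lagrange.basisDivisor]
      calc (Polynomial.C (v i - v j)⁻¹ * (X - Polynomial.C (v j))).natDegree
          ≤ (Polynomial.C (v i - v j)⁻¹).natDegree + (X - Polynomial.C (v j)).natDegree :=
            Polynomial.natDegree_mul_le
        _ ≤ 1 := by simp [Polynomial.natDegree_X_sub_C]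
  have hgeval : ∀ i ∈ s, g.eval (v i) = 0 := by
    intro i hi
    rw [hgfin, Polynomial.eval_prod]
    exact Finset.prod_eq_zero hi (by simp)
  have hPeval : ∀ i ∈ s, P.eval (v i) = -∏ k ∈ s.erase i, (v i - v k - 1) := by
    intro i hi
    rw [hPfin, Polynomial.eval_prod]
    have : ∀ k ∈ s, Polynomial.eval (v i) (X - C (v k + 1)) = v i - v k - 1 := by
      intro k _; simp; ring
    rw [Finset.prod_congr rfl this, ← Finset.mul_prod_erase s _ hi]
    have h1 : v i - v i - 1 = -1 := by ring
    rw [h1, neg_one_mul]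
  have hDeval : ∀ i ∈ s, D.eval (v i) = -(v i * ∏ k ∈ s.erase i, (v i - v k - 1)) := by
    intro i hi
    rw [hD, hQ, hG, Polynomial.eval_sub, Polynomial.eval_mul, Polynomial.eval_mul,
      hgeval i hi, mul_zero, sub_zero, Polynomial.eval_X, hPeval i hi]
    ring
  -- extract coefficient m-1 from interpolation
  have hfinal : D.coeff (m-1) = ∑ i ∈ s, (D.eval (v i)) * ∏ j ∈ s.erase i, (v i - v j)⁻¹ := by
    conv_lhs => rw [hDI]
    rw [Lagrange.interpolate_apply, Polynomial.finset_sum_coeff]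
    apply Finset.sum_congr rfl
    intro i hi
    rw [Polynomial.coeff_C_mul, hbasis i hi]
  rw [hDcoeff] at hfinal
  have hneg : ∑ i ∈ s, (D.eval (v i)) * ∏ j ∈ s.erase i, (v i - v j)⁻¹
      = -∑ r ∈ s, v r * ∏ k ∈ s.erase r, ((v r - v k - 1) / (v r - v k)) := by
    rw [← Finset.sum_neg_distrib]
    apply Finset.sum_congr rfl
    intro i hi
    rw [hDeval i hi]
    rw [Finset.prod_div_distrib, Finset.prod_inv_distrib]
    ring
  rw [hneg] at hfinal
  have hsum : S.sum = ∑ r ∈ s, v r := by rw [hS]; exact Finset.sum_map_val s v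
  rw [hsum] at hfinal
  linarith [hfinal]

end HLF


namespace HLF

open Finset Nat

/-- The shifted row lengths. -/
def xval (μ : YoungDiagram) (m i : ℕ) : ℕ := μ.rowLen i + (m - 1 - i)

lemma xval_sub {μ : YoungDiagram} {m i k : ℕ} (hik : i < k) (hk : k < m) :
    xval μ m i - xval μ m k = (μ.rowLen i - μ.rowLen k) + (k - i) := by
  have h1 : μ.rowLen k ≤ μ.rowLen i := μ.rowLen_anti i k hik.le
  unfold xval; omega

lemma xval_lt {μ : YoungDiagram} {m i k : ℕ} (hik : i < k) (hk : k < m) :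
    xval μ m k < xval μ m i := by
  have h1 : μ.rowLen k ≤ μ.rowLen i := μ.rowLen_anti i k hik.le
  unfold xval; omega

lemma hookLen_eq {μ : YoungDiagram} {i j : ℕ} (hj : j < μ.rowLen i) :
    hookLen μ i j + (j + i + 1) = μ.rowLen i + μ.colLen j := by
  have hmem : (i, j) ∈ μ := YoungDiagram.mem_iff_lt_rowLen.mpr hj
  have hc : i < μ.colLen j := YoungDiagram.mem_iff_lt_colLen.mp hmem
  unfold hookLen; omega

lemma hookLen_pos {μ : YoungDiagram} {i j : ℕ} (hj : j < μ.rowLen i) :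
    1 ≤ hookLen μ i j := by
  have hmem : (i, j) ∈ μ := YoungDiagram.mem_iff_lt_rowLen.mpr hj
  have hc : i < μ.colLen j := YoungDiagram.mem_iff_lt_colLen.mp hmem
  unfold hookLen; omega

lemma hookLen_le {μ : YoungDiagram} {m i j : ℕ} (hj : j < μ.rowLen i) (hm : μ.colLen 0 ≤ m)
    (him : i < m) : hookLen μ i j ≤ xval μ m i := by
  have hmem : (i, j) ∈ μ := YoungDiagram.mem_iff_lt_rowLen.mpr hj
  have hc : i < μ.colLen j := YoungDiagram.mem_iff_lt_colLen.mp hmem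
  have hc0 : μ.colLen j ≤ μ.colLen 0 := μ.colLen_anti 0 j (Nat.zero_le _)
  unfold hookLen xval; omega

lemma hookLen_strict_anti {μ : YoungDiagram} {i j₁ j₂ : ℕ} (h12 : j₁ < j₂)
    (hj : j₂ < μ.rowLen i) : hookLen μ i j₂ < hookLen μ i j₁ := by
  have h1 := hookLen_eq (lt_trans h12 hj)
  have h2 := hookLen_eq hj
  have hcc : μ.colLen j₂ ≤ μ.colLen j₁ := μ.colLen_anti j₁ j₂ h12.le
  omega

/-- the hook lengths in a row and the differences `x i - x k` are distinct. -/
lemma hook_ne_diff {μ : YoungDiagram} {m i j k : ℕ} (hj : j < μ.rowLen i)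
    (hik : i < k) (hk : k < m) (hm : μ.colLen 0 ≤ m) :
    hookLen μ i j ≠ xval μ m i - xval μ m k := by
  intro heq
  have h1 := hookLen_eq hj
  have h2 := xval_sub (μ := μ) hik hk
  have h3 : μ.rowLen k ≤ μ.rowLen i := μ.rowLen_anti i k hik.le
  -- key equivalence : k < colLen j ↔ j < rowLen k
  have hiff : k < μ.colLen j ↔ j < μ.rowLen k := by
    rw [← YoungDiagram.mem_iff_lt_colLen, YoungDiagram.mem_iff_lt_rowLen]
  rcases Nat.lt_or_ge k (μ.colLen j) with hcase | hcase
  · have := hiff.mp hcase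
    omega
  · have : ¬ (j < μ.rowLen k) := fun h => by have := hiff.mpr h; omega
    omega

/-- The row lemma: hooks in row `i` together with the differences fill `[1, x i]`. -/
lemma row_lemma (μ : YoungDiagram) {m i : ℕ} (hm : μ.colLen 0 ≤ m) (him : i < m) :
    (∏ j ∈ range (μ.rowLen i), hookLen μ i j) *
      (∏ k ∈ Ioo i m, (xval μ m i - xval μ m k)) = (xval μ m i)! := by
  classical
  set A : Finset ℕ := (range (μ.rowLen i)).image (fun j => hookLen μ i j) with hA
  set B : Finset ℕ := (Ioo i m).image (fun k => xval μ m i - xval μ m k) with hB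
  have hinjA : Set.InjOn (fun j => hookLen μ i j) (range (μ.rowLen i)) := by
    intro a ha b hb hab
    simp only [coe_range, Set.mem_Iio] at ha hb
    have hab' : hookLen μ i a = hookLen μ i b := hab
    by_contra hne
    rcases Nat.lt_or_ge a b with h | h
    · have := hookLen_strict_anti h hb; omega
    · have h' : b < a := by omega
      have := hookLen_strict_anti h' ha; omega
  have hinjB : Set.InjOn (fun k => xval μ m i - xval μ m k) (Ioo i m) := by
    intro a ha b hb hab
    simp only [coe_Ioo, Set.mem_Ioo] at ha hb
    have hab' : xval μ m i - xval μ m a = xval μ m i - xval μ m b := hab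
    by_contra hne
    have h1 := xval_lt (μ := μ) ha.1 ha.2
    have h2 := xval_lt (μ := μ) hb.1 hb.2
    rcases Nat.lt_or_ge a b with h | h
    · have := xval_lt (μ := μ) h hb.2; omega
    · have h' : b < a := by omega
      have := xval_lt (μ := μ) h' ha.2; omega
  have hAsub : A ⊆ Icc 1 (xval μ m i) := by
    intro a ha
    rw [hA, mem_image] at ha
    obtain ⟨j, hj, rfl⟩ := ha
    rw [mem_range] at hj
    exact mem_Icc.mpr ⟨hookLen_pos hj, hookLen_le hj hm him⟩
  have hBsub : B ⊆ Icc 1 (xval μ m i) := by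
    intro a ha
    rw [hB, mem_image] at ha
    obtain ⟨k, hk, rfl⟩ := ha
    rw [mem_Ioo] at hk
    have := xval_lt (μ := μ) hk.1 hk.2
    exact mem_Icc.mpr ⟨by omega, by omega⟩
  have hdisj : Disjoint A B := by
    rw [Finset.disjoint_left]
    intro a haA haB
    rw [hA, mem_image] at haA
    rw [hB, mem_image] at haB
    obtain ⟨j, hj, rfl⟩ := haA
    obtain ⟨k, hk, hk2⟩ := haB
    rw [mem_range] at hj
    rw [mem_Ioo] at hk
    exact hook_ne_diff hj hk.1 hk.2 hm hk2.symm
  have hcardA : A.card = μ.rowLen i := by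
    rw [hA, Finset.card_image_of_injOn hinjA, card_range]
  have hcardB : B.card = m - 1 - i := by
    rw [hB, Finset.card_image_of_injOn hinjB, Nat.card_Ioo]; omega
  have hunion : A ∪ B = Icc 1 (xval μ m i) := by
    apply Finset.eq_of_subset_of_card_le (Finset.union_subset hAsub hBsub)
    rw [Finset.card_union_of_disjoint hdisj, hcardA, hcardB, Nat.card_Icc]
    unfold xval; omega
  have hprod : (∏ a ∈ A ∪ B, a) = (xval μ m i)! := by
    rw [hunion, ← Finset.Ico_add_one_right_eq_Icc]
    exact Finset.prod_Ico_id_eq_factorial _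
  rw [Finset.prod_union hdisj] at hprod
  rw [hA, hB, Finset.prod_image hinjA, Finset.prod_image hinjB] at hprod
  exact hprod

/-- decomposition of the cells of `μ` into rows. -/
lemma cells_eq_biUnion (μ : YoungDiagram) {m : ℕ} (hm : μ.colLen 0 ≤ m) :
    μ.cells = (range m).biUnion (fun i => {i} ×ˢ range (μ.rowLen i)) := by
  ext ⟨i, j⟩
  simp only [Finset.mem_biUnion, mem_range, Finset.mem_product, Finset.mem_singleton]
  constructor
  · intro h
    rw [YoungDiagram.mem_cells] at h
    refine ⟨i, ?_, rfl, YoungDiagram.mem_iff_lt_rowLen.mp h⟩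
    have h1 : i < μ.colLen j := YoungDiagram.mem_iff_lt_colLen.mp h
    have h2 : μ.colLen j ≤ μ.colLen 0 := μ.colLen_anti 0 j (Nat.zero_le _)
    omega
  · rintro ⟨i', hi', rfl, hj⟩
    rw [YoungDiagram.mem_cells]
    exact YoungDiagram.mem_iff_lt_rowLen.mpr (by simpa using hj)

lemma prod_cells {M : Type*} [CommMonoid M] (μ : YoungDiagram) {m : ℕ} (hm : μ.colLen 0 ≤ m)
    (f : ℕ → ℕ → M) :
    ∏ c ∈ μ.cells, f c.1 c.2 = ∏ i ∈ range m, ∏ j ∈ range (μ.rowLen i), f i j := by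
  rw [cells_eq_biUnion μ hm, Finset.prod_biUnion]
  · apply Finset.prod_congr rfl
    intro i _
    rw [Finset.singleton_product, Finset.prod_map]
    rfl
  · intro a _ b _ hab
    simp only [Finset.disjoint_left]
    rintro ⟨c1, c2⟩ h1 h2
    simp only [Finset.mem_product, Finset.mem_singleton] at h1 h2
    exact hab (h1.1 ▸ h2.1.symm ▸ rfl)

/-- The hook length product formula. -/
theorem hook_prod_formula (μ : YoungDiagram) {m : ℕ} (hm : μ.colLen 0 ≤ m) :
    (∏ c ∈ μ.cells, hookLen μ c.1 c.2) *
      (∏ i ∈ range m, ∏ k ∈ Ioo i m, (xval μ m i - xval μ m k))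
    = ∏ i ∈ range m, (xval μ m i)! := by
  rw [prod_cells μ hm, ← Finset.prod_mul_distrib]
  exact Finset.prod_congr rfl fun i hi => row_lemma μ hm (mem_range.mp hi)

end HLF

namespace HLF
open Finset

/-- The SYT predicate matching `sytCount`. -/
def SYT (μ : YoungDiagram) (f : ℕ → ℕ → ℕ) : Prop :=
  (∀ i j, (i, j) ∉ μ → f i j = 0) ∧
  Set.BijOn (fun c : ℕ × ℕ => f c.1 c.2) ↑μ.cells (Set.Icc 1 μ.card) ∧
  (∀ i j₁ j₂, j₁ < j₂ → (i, j₂) ∈ μ → f i j₁ < f i j₂) ∧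
  (∀ i₁ i₂ j, i₁ < i₂ → (i₂, j) ∈ μ → f i₁ j < f i₂ j)

noncomputable def count (μ : YoungDiagram) : ℕ := Nat.card {f : ℕ → ℕ → ℕ // SYT μ f}

lemma bot_of_cells_empty {μ : YoungDiagram} (h : μ.cells = ∅) : μ = ⊥ := by
  apply le_bot_iff.mp
  rw [← YoungDiagram.cells_subset_iff, h]
  exact Finset.empty_subset _

lemma card_pos_of_ne_bot {μ : YoungDiagram} (hμ : μ ≠ ⊥) : 0 < μ.card := by
  rw [Finset.card_pos]
  by_contra h
  exact hμ (bot_of_cells_empty (Finset.not_nonempty_iff_eq_empty.mp h))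

lemma mem_cells_coe {μ : YoungDiagram} {c : ℕ × ℕ} : c ∈ (↑μ.cells : Set (ℕ × ℕ)) ↔ c ∈ μ := by
  rw [Finset.mem_coe, YoungDiagram.mem_cells]

/-- finiteness of SYT sets -/
instance sytFinite (μ : YoungDiagram) : Finite {f : ℕ → ℕ → ℕ // SYT μ f} := by
  have : ∀ (p : {f : ℕ → ℕ → ℕ // SYT μ f}) (c : ↑(μ.cells : Set (ℕ × ℕ))),
      p.1 c.1.1 c.1.2 ∈ Set.Icc 1 μ.card := by
    intro p c
    exact p.2.2.1.mapsTo c.2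
  have hfin : Finite (↑(μ.cells : Set (ℕ × ℕ)) → ↑(Set.Icc 1 μ.card : Set ℕ)) := by
    have : Finite ↑(Set.Icc 1 μ.card : Set ℕ) := (Set.finite_Icc 1 μ.card).to_subtype
    have : Finite ↑(μ.cells : Set (ℕ × ℕ)) := Finset.finite_toSet _
    exact Pi.finite
  apply Finite.of_injective (fun p => (fun c => ⟨p.1 c.1.1 c.1.2, this p c⟩ :
    ↑(μ.cells : Set (ℕ × ℕ)) → ↑(Set.Icc 1 μ.card : Set ℕ)))
  intro p q hpq
  apply Subtype.ext
  funext i j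
  by_cases hc : (i, j) ∈ μ
  · have := congrFun hpq ⟨(i,j), mem_cells_coe.mpr hc⟩
    simpa using this
  · rw [p.2.1 i j hc, q.2.1 i j hc]

lemma count_bot : count ⊥ = 1 := by
  have hz : SYT ⊥ (fun _ _ => 0) := by
    refine ⟨fun _ _ _ => rfl, ?_, ?_, ?_⟩
    · have h1 : (↑(⊥ : YoungDiagram).cells : Set (ℕ × ℕ)) = ∅ := by
        rw [YoungDiagram.cells_bot]; simp
      have h2 : (Set.Icc 1 (⊥ : YoungDiagram).card : Set ℕ) = ∅ := by
        have : (⊥ : YoungDiagram).card = 0 := by simp [YoungDiagram.card, YoungDiagram.cells_bot]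
        rw [this]; exact Set.Icc_eq_empty (by norm_num)
      rw [h1, h2]
      exact ⟨fun x hx => absurd hx (Set.notMem_empty x),
        fun x hx => absurd hx (Set.notMem_empty x),
        fun x hx => absurd hx (Set.notMem_empty x)⟩
    · intro i j₁ j₂ _ h
      exact absurd h (YoungDiagram.notMem_bot _)
    · intro i₁ i₂ j _ h
      exact absurd h (YoungDiagram.notMem_bot _)
  have : Unique {f : ℕ → ℕ → ℕ // SYT ⊥ f} := by
    refine ⟨⟨⟨fun _ _ => 0, hz⟩⟩, ?_⟩
    intro p
    apply Subtype.ext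
    funext i j
    exact p.2.1 i j (YoungDiagram.notMem_bot _)
  rw [count]
  exact Nat.card_unique

/-! ### corners and carving -/

def corners (μ : YoungDiagram) : Finset ℕ :=
  (Finset.range (μ.colLen 0)).filter (fun r => μ.rowLen (r+1) < μ.rowLen r)

lemma rowLen_pos_iff {μ : YoungDiagram} {r : ℕ} : 0 < μ.rowLen r ↔ r < μ.colLen 0 := by
  rw [← YoungDiagram.mem_iff_lt_rowLen, YoungDiagram.mem_iff_lt_colLen]

lemma mem_corners {μ : YoungDiagram} {r : ℕ} :
    r ∈ corners μ ↔ μ.rowLen (r+1) < μ.rowLen r := by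
  rw [corners, Finset.mem_filter, Finset.mem_range]
  constructor
  · exact fun h => h.2
  · intro h
    exact ⟨rowLen_pos_iff.mp (by omega), h⟩

lemma corner_cell_mem {μ : YoungDiagram} {r : ℕ} (h : μ.rowLen (r+1) < μ.rowLen r) :
    (r, μ.rowLen r - 1) ∈ μ :=
  YoungDiagram.mem_iff_lt_rowLen.mpr (by omega)

/-- removing the corner cell of row `r`. -/
def carve (μ : YoungDiagram) (r : ℕ) : YoungDiagram :=
  if h : μ.rowLen (r+1) < μ.rowLen r then
    { cells := μ.cells.erase (r, μ.rowLen r - 1)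
      isLowerSet := by
        intro a b hba ha
        rw [Finset.mem_coe, Finset.mem_erase] at ha ⊢
        obtain ⟨hane, hamem⟩ := ha
        rw [YoungDiagram.mem_cells] at hamem ⊢
        refine ⟨?_, μ.isLowerSet hba hamem⟩
        rintro rfl
        obtain ⟨i, j⟩ := a
        obtain ⟨h1, h2⟩ := hba
        simp only at h1 h2
        have hj : j < μ.rowLen i := YoungDiagram.mem_iff_lt_rowLen.mp hamem
        rcases Nat.eq_or_lt_of_le h1 with rfl | hlt
        · refine hane ?_
          rw [Prod.mk.injEq]
          exact ⟨rfl, by omega⟩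
        · have : μ.rowLen i ≤ μ.rowLen (r+1) := μ.rowLen_anti _ _ (by omega)
          omega }
  else μ

lemma mem_carve {μ : YoungDiagram} {r : ℕ} (h : μ.rowLen (r+1) < μ.rowLen r) {c : ℕ × ℕ} :
    c ∈ carve μ r ↔ c ∈ μ ∧ c ≠ (r, μ.rowLen r - 1) := by
  rw [carve, dif_pos h]
  show c ∈ μ.cells.erase _ ↔ _
  rw [Finset.mem_erase, YoungDiagram.mem_cells, and_comm]

lemma carve_cells {μ : YoungDiagram} {r : ℕ} (h : μ.rowLen (r+1) < μ.rowLen r) :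
    (carve μ r).cells = μ.cells.erase (r, μ.rowLen r - 1) := by
  rw [carve, dif_pos h]

lemma carve_card {μ : YoungDiagram} {r : ℕ} (h : μ.rowLen (r+1) < μ.rowLen r) :
    (carve μ r).card = μ.card - 1 := by
  show (carve μ r).cells.card = μ.cells.card - 1
  rw [carve_cells h,
    Finset.card_erase_of_mem (by rw [YoungDiagram.mem_cells]; exact corner_cell_mem h)]

lemma rowLen_eq_of {μ : YoungDiagram} {i n : ℕ} (h1 : ∀ j, j < n → (i, j) ∈ μ)
    (h2 : (i, n) ∉ μ) : μ.rowLen i = n := by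
  rw [YoungDiagram.mem_iff_lt_rowLen] at h2
  rcases Nat.lt_or_ge (μ.rowLen i) n with hlt | hge
  · have := YoungDiagram.mem_iff_lt_rowLen.mp (h1 _ hlt)
    omega
  · omega

lemma carve_rowLen {μ : YoungDiagram} {r : ℕ} (h : μ.rowLen (r+1) < μ.rowLen r) (i : ℕ) :
    (carve μ r).rowLen i = if i = r then μ.rowLen r - 1 else μ.rowLen i := by
  split_ifs with hir
  · subst hir
    apply rowLen_eq_of
    · intro j hj
      rw [mem_carve h]
      constructor
      · exact YoungDiagram.mem_iff_lt_rowLen.mpr (by omega)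
      · intro heq; rw [Prod.mk.injEq] at heq; omega
    · rw [mem_carve h]
      rintro ⟨hmem, hne⟩
      have := YoungDiagram.mem_iff_lt_rowLen.mp hmem
      refine hne ?_
      rw [Prod.mk.injEq]
      omega
  · apply rowLen_eq_of
    · intro j hj
      rw [mem_carve h]
      refine ⟨YoungDiagram.mem_iff_lt_rowLen.mpr hj, ?_⟩
      intro heq; rw [Prod.mk.injEq] at heq
      exact hir heq.1
    · rw [mem_carve h]
      rintro ⟨hmem, _⟩
      exact absurd (YoungDiagram.mem_iff_lt_rowLen.mp hmem) (by omega)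

lemma colLen_le_of_le {μ ν : YoungDiagram} (h : ν ≤ μ) (j : ℕ) : ν.colLen j ≤ μ.colLen j := by
  by_contra hlt
  push_neg at hlt
  have : (μ.colLen j, j) ∈ ν := YoungDiagram.mem_iff_lt_colLen.mpr hlt
  have : (μ.colLen j, j) ∈ μ := by
    rw [← YoungDiagram.mem_cells] at this ⊢
    exact YoungDiagram.cells_subset_iff.mpr h this
  have := YoungDiagram.mem_iff_lt_colLen.mp this
  omega

lemma carve_le {μ : YoungDiagram} {r : ℕ} : carve μ r ≤ μ := by
  by_cases h : μ.rowLen (r+1) < μ.rowLen r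
  · rw [← YoungDiagram.cells_subset_iff, carve_cells h]
    exact Finset.erase_subset _ _
  · rw [carve, dif_neg h]

/-! ### the maximal entry sits in a corner -/

lemma max_cell_corner {μ : YoungDiagram} {f : ℕ → ℕ → ℕ} (hf : SYT μ f) {c : ℕ × ℕ}
    (hc : c ∈ μ) (hfc : f c.1 c.2 = μ.card) :
    μ.rowLen (c.1+1) < μ.rowLen c.1 ∧ c.2 = μ.rowLen c.1 - 1 := by
  obtain ⟨i, j⟩ := c
  simp only at hfc ⊢
  have hright : (i, j+1) ∉ μ := by
    intro hmem
    have hlt := hf.2.2.1 i j (j+1) (by omega) hmem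
    have hle : f i (j+1) ≤ μ.card := (hf.2.1.mapsTo (mem_cells_coe.mpr hmem)).2
    omega
  have hdown : (i+1, j) ∉ μ := by
    intro hmem
    have hlt := hf.2.2.2 i (i+1) j (by omega) hmem
    have hle : f (i+1) j ≤ μ.card := (hf.2.1.mapsTo (mem_cells_coe.mpr hmem)).2
    omega
  rw [YoungDiagram.mem_iff_lt_rowLen] at hright hdown
  have hj := YoungDiagram.mem_iff_lt_rowLen.mp hc
  constructor <;> omega

lemma exists_max {μ : YoungDiagram} (hμ : μ ≠ ⊥) {f : ℕ → ℕ → ℕ} (hf : SYT μ f) :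
    ∃ c : ℕ × ℕ, c ∈ μ ∧ f c.1 c.2 = μ.card := by
  have hn := card_pos_of_ne_bot hμ
  obtain ⟨c, hc, hfc⟩ := hf.2.1.surjOn (Set.mem_Icc.mpr ⟨hn, le_rfl⟩)
  exact ⟨c, mem_cells_coe.mp hc, hfc⟩

/-! ### extension and restriction -/

/-- extend a filling of `carve μ r` by putting `μ.card` in the corner cell. -/
def ext (μ : YoungDiagram) (r : ℕ) (f : ℕ → ℕ → ℕ) : ℕ → ℕ → ℕ :=
  fun i j => if (i, j) = (r, μ.rowLen r - 1) then μ.card else f i j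

lemma ext_ne {μ : YoungDiagram} {r : ℕ} {f : ℕ → ℕ → ℕ} {i j : ℕ}
    (hne : (i, j) ≠ (r, μ.rowLen r - 1)) : ext μ r f i j = f i j := if_neg hne

lemma ext_ne' {μ : YoungDiagram} {r : ℕ} {f : ℕ → ℕ → ℕ} {c : ℕ × ℕ}
    (hne : c ≠ (r, μ.rowLen r - 1)) : ext μ r f c.1 c.2 = f c.1 c.2 :=
  if_neg (by rwa [Prod.mk.eta])

lemma ext_corner {μ : YoungDiagram} {r : ℕ} (f : ℕ → ℕ → ℕ) :
    ext μ r f r (μ.rowLen r - 1) = μ.card := if_pos rfl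

lemma ext_corner' {μ : YoungDiagram} {r : ℕ} (f : ℕ → ℕ → ℕ) {c : ℕ × ℕ}
    (hc : c = (r, μ.rowLen r - 1)) : ext μ r f c.1 c.2 = μ.card :=
  if_pos (by rwa [Prod.mk.eta])

lemma SYT_ext {μ : YoungDiagram} {r : ℕ} (h : μ.rowLen (r+1) < μ.rowLen r)
    {f : ℕ → ℕ → ℕ} (hf : SYT (carve μ r) f) : SYT μ (ext μ r f) := by
  have hcorner : (r, μ.rowLen r - 1) ∈ μ := corner_cell_mem h
  have hn : 0 < μ.card := by
    rw [Finset.card_pos]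
    exact ⟨_, (YoungDiagram.mem_cells _).mpr hcorner⟩
  have hcard : (carve μ r).card = μ.card - 1 := carve_card h
  have hval : ∀ c : ℕ × ℕ, c ∈ carve μ r → 1 ≤ f c.1 c.2 ∧ f c.1 c.2 ≤ μ.card - 1 := by
    intro c hc
    have := hf.2.1.mapsTo (mem_cells_coe.mpr hc)
    rw [Set.mem_Icc, hcard] at this
    exact this
  have hext_at : ∀ c : ℕ × ℕ, c ∈ carve μ r → ext μ r f c.1 c.2 = f c.1 c.2 := by
    intro c hc
    obtain ⟨i, j⟩ := c
    have hne := (mem_carve h).mp hc |>.2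
    rw [ext, if_neg hne]
  refine ⟨?_, ⟨?_, ?_, ?_⟩, ?_, ?_⟩
  · -- zero outside
    intro i j hij
    have hne : (i, j) ≠ (r, μ.rowLen r - 1) := fun heq => hij (heq ▸ hcorner)
    rw [ext, if_neg hne]
    exact hf.1 i j (fun hmem => hij ((mem_carve h).mp hmem).1)
  · -- mapsTo
    intro c hc
    rw [mem_cells_coe] at hc
    by_cases hcc : c = (r, μ.rowLen r - 1)
    · show ext μ r f _ _ ∈ _
      rw [ext_corner' f hcc]
      exact Set.mem_Icc.mpr ⟨hn, le_rfl⟩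
    · have hc' : c ∈ carve μ r := (mem_carve h).mpr ⟨hc, hcc⟩
      show ext μ r f _ _ ∈ _
      rw [hext_at c hc']
      have := hval c hc'
      exact Set.mem_Icc.mpr ⟨this.1, by omega⟩
  · -- injOn
    intro a ha b hb hab
    rw [mem_cells_coe] at ha hb
    by_cases hac : a = (r, μ.rowLen r - 1) <;> by_cases hbc : b = (r, μ.rowLen r - 1)
    · rw [hac, hbc]
    · exfalso
      have hb' : b ∈ carve μ r := (mem_carve h).mpr ⟨hb, hbc⟩
      have h1 : ext μ r f a.1 a.2 = μ.card := ext_corner' f hac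
      have h2 : ext μ r f b.1 b.2 = f b.1 b.2 := hext_at b hb'
      have := hval b hb'
      simp only at hab
      omega
    · exfalso
      have ha' : a ∈ carve μ r := (mem_carve h).mpr ⟨ha, hac⟩
      have h1 : ext μ r f b.1 b.2 = μ.card := ext_corner' f hbc
      have h2 : ext μ r f a.1 a.2 = f a.1 a.2 := hext_at a ha'
      have := hval a ha'
      simp only at hab
      omega
    · have ha' : a ∈ carve μ r := (mem_carve h).mpr ⟨ha, hac⟩
      have hb' : b ∈ carve μ r := (mem_carve h).mpr ⟨hb, hbc⟩
      apply hf.2.1.injOn (mem_cells_coe.mpr ha') (mem_cells_coe.mpr hb')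
      simp only at hab ⊢
      rw [hext_at a ha', hext_at b hb'] at hab
      exact hab
  · -- surjOn
    intro y hy
    rw [Set.mem_Icc] at hy
    by_cases hyn : y = μ.card
    · refine ⟨(r, μ.rowLen r - 1), mem_cells_coe.mpr hcorner, ?_⟩
      show ext μ r f _ _ = y
      show ext μ r f r (μ.rowLen r - 1) = y
      rw [ext_corner f, hyn]
    · have : y ∈ Set.Icc 1 (carve μ r).card := by
        rw [Set.mem_Icc, hcard]
        omega
      obtain ⟨c, hc, hfc⟩ := hf.2.1.surjOn this
      rw [mem_cells_coe] at hc
      refine ⟨c, mem_cells_coe.mpr ((mem_carve h).mp hc).1, ?_⟩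
      show ext μ r f c.1 c.2 = y
      rw [hext_at c hc]
      exact hfc
  · -- rows increasing
    intro i j₁ j₂ hj hmem
    by_cases h2 : (i, j₂) = (r, μ.rowLen r - 1)
    · have h1ne : (i, j₁) ≠ (r, μ.rowLen r - 1) := by
        intro heq
        rw [Prod.mk.injEq] at heq h2
        omega
      have hm1 : (i, j₁) ∈ μ := μ.up_left_mem le_rfl hj.le hmem
      have hm1' : (i, j₁) ∈ carve μ r := (mem_carve h).mpr ⟨hm1, h1ne⟩
      have hv := hval (i, j₁) hm1'
      simp only at hv
      show ext μ r f i j₁ < ext μ r f i j₂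
      rw [ext_ne h1ne, ext_corner' f h2]
      omega
    · have hm2 : (i, j₂) ∈ carve μ r := (mem_carve h).mpr ⟨hmem, h2⟩
      have h1ne : (i, j₁) ≠ (r, μ.rowLen r - 1) := by
        intro heq
        rw [Prod.mk.injEq] at heq
        obtain ⟨rfl, rfl⟩ := heq
        have hj2 := YoungDiagram.mem_iff_lt_rowLen.mp hmem
        omega
      show ext μ r f i j₁ < ext μ r f i j₂
      rw [ext_ne h1ne, ext_ne h2]
      exact hf.2.2.1 i j₁ j₂ hj hm2
  · -- columns increasing
    intro i₁ i₂ j hi hmem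
    by_cases h2 : (i₂, j) = (r, μ.rowLen r - 1)
    · have h1ne : (i₁, j) ≠ (r, μ.rowLen r - 1) := by
        intro heq
        rw [Prod.mk.injEq] at heq h2
        omega
      have hm1 : (i₁, j) ∈ μ := μ.up_left_mem hi.le le_rfl hmem
      have hm1' : (i₁, j) ∈ carve μ r := (mem_carve h).mpr ⟨hm1, h1ne⟩
      have hv := hval (i₁, j) hm1'
      simp only at hv
      show ext μ r f i₁ j < ext μ r f i₂ j
      rw [ext_ne h1ne, ext_corner' f h2]
      omega
    · have hm2 : (i₂, j) ∈ carve μ r := (mem_carve h).mpr ⟨hmem, h2⟩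
      have h1ne : (i₁, j) ≠ (r, μ.rowLen r - 1) := by
        intro heq
        rw [Prod.mk.injEq] at heq
        obtain ⟨h1, h2⟩ := heq
        have hj2 := YoungDiagram.mem_iff_lt_rowLen.mp hmem
        have hle : μ.rowLen i₂ ≤ μ.rowLen (i₁+1) := μ.rowLen_anti _ _ (by omega)
        rw [h1] at hle
        omega
      show ext μ r f i₁ j < ext μ r f i₂ j
      rw [ext_ne h1ne, ext_ne h2]
      exact hf.2.2.2 i₁ i₂ j hi hm2


/-- restriction: zero out the corner cell. -/
def res (μ : YoungDiagram) (r : ℕ) (f : ℕ → ℕ → ℕ) : ℕ → ℕ → ℕ :=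
  fun i j => if (i, j) = (r, μ.rowLen r - 1) then 0 else f i j

lemma ext_res {μ : YoungDiagram} {r : ℕ} {f : ℕ → ℕ → ℕ}
    (hmax : f r (μ.rowLen r - 1) = μ.card) : ext μ r (res μ r f) = f := by
  funext i j
  rw [ext, res]
  by_cases hc : (i, j) = (r, μ.rowLen r - 1)
  · rw [if_pos hc]
    rw [Prod.mk.injEq] at hc
    rw [hc.1, hc.2, hmax]
  · rw [if_neg hc, if_neg hc]

lemma res_ext {μ : YoungDiagram} {r : ℕ} (h : μ.rowLen (r+1) < μ.rowLen r)
    {f : ℕ → ℕ → ℕ} (hf : SYT (carve μ r) f) : res μ r (ext μ r f) = f := by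
  funext i j
  rw [res, ext]
  by_cases hc : (i, j) = (r, μ.rowLen r - 1)
  · rw [if_pos hc]
    refine (hf.1 i j ?_).symm
    rw [mem_carve h]
    rintro ⟨_, hne⟩
    exact hne hc
  · rw [if_neg hc, if_neg hc]

lemma SYT_res {μ : YoungDiagram} {r : ℕ} (h : μ.rowLen (r+1) < μ.rowLen r)
    {f : ℕ → ℕ → ℕ} (hf : SYT μ f) (hmax : f r (μ.rowLen r - 1) = μ.card) :
    SYT (carve μ r) (res μ r f) := by
  have hcorner : (r, μ.rowLen r - 1) ∈ μ := corner_cell_mem h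
  have hn : 0 < μ.card := by
    rw [Finset.card_pos]
    exact ⟨_, (YoungDiagram.mem_cells _).mpr hcorner⟩
  have hcard : (carve μ r).card = μ.card - 1 := carve_card h
  have hres_at : ∀ c : ℕ × ℕ, c ∈ carve μ r → res μ r f c.1 c.2 = f c.1 c.2 := by
    intro c hc
    have hne := (mem_carve h).mp hc |>.2
    rw [res, show ((c.1, c.2) : ℕ × ℕ) = c from rfl, if_neg hne]
  have hvne : ∀ c : ℕ × ℕ, c ∈ carve μ r → f c.1 c.2 ≠ μ.card := by
    intro c hc hcv
    have hne := (mem_carve h).mp hc |>.2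
    have hcm := (mem_carve h).mp hc |>.1
    have : c = (r, μ.rowLen r - 1) := by
      apply hf.2.1.injOn (mem_cells_coe.mpr hcm) (mem_cells_coe.mpr hcorner)
      simp only
      rw [hcv, hmax]
    exact hne this
  have hval : ∀ c : ℕ × ℕ, c ∈ μ → 1 ≤ f c.1 c.2 ∧ f c.1 c.2 ≤ μ.card := by
    intro c hc
    have := hf.2.1.mapsTo (mem_cells_coe.mpr hc)
    rw [Set.mem_Icc] at this
    exact this
  refine ⟨?_, ⟨?_, ?_, ?_⟩, ?_, ?_⟩
  · intro i j hij
    rw [res]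
    by_cases hc : (i, j) = (r, μ.rowLen r - 1)
    · rw [if_pos hc]
    · rw [if_neg hc]
      apply hf.1
      intro hmem
      exact hij ((mem_carve h).mpr ⟨hmem, hc⟩)
  · intro c hc
    rw [mem_cells_coe] at hc
    show res μ r f c.1 c.2 ∈ _
    rw [hres_at c hc, Set.mem_Icc, hcard]
    have h1 := hval c ((mem_carve h).mp hc).1
    have h2 := hvne c hc
    omega
  · intro a ha b hb hab
    rw [mem_cells_coe] at ha hb
    apply hf.2.1.injOn (mem_cells_coe.mpr ((mem_carve h).mp ha).1)
      (mem_cells_coe.mpr ((mem_carve h).mp hb).1)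
    simp only at hab ⊢
    rw [hres_at a ha, hres_at b hb] at hab
    exact hab
  · intro y hy
    rw [Set.mem_Icc, hcard] at hy
    have : y ∈ Set.Icc 1 μ.card := Set.mem_Icc.mpr ⟨hy.1, by omega⟩
    obtain ⟨c, hc, hfc⟩ := hf.2.1.surjOn this
    rw [mem_cells_coe] at hc
    have hcne : c ≠ (r, μ.rowLen r - 1) := by
      intro heq
      subst heq
      simp only at hfc
      rw [hmax] at hfc
      omega
    have hc' : c ∈ carve μ r := (mem_carve h).mpr ⟨hc, hcne⟩
    refine ⟨c, mem_cells_coe.mpr hc', ?_⟩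
    show res μ r f c.1 c.2 = y
    rw [hres_at c hc']
    exact hfc
  · intro i j₁ j₂ hj hmem
    have hm2 : (i, j₂) ∈ μ := ((mem_carve h).mp hmem).1
    have hm1 : (i, j₁) ∈ μ := μ.up_left_mem le_rfl hj.le hm2
    have h1ne : (i, j₁) ≠ (r, μ.rowLen r - 1) := by
      intro heq
      rw [Prod.mk.injEq] at heq
      obtain ⟨rfl, rfl⟩ := heq
      have := YoungDiagram.mem_iff_lt_rowLen.mp hm2
      omega
    show res μ r f i j₁ < res μ r f i j₂
    rw [res, res, if_neg h1ne, if_neg (((mem_carve h).mp hmem).2)]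
    exact hf.2.2.1 i j₁ j₂ hj hm2
  · intro i₁ i₂ j hi hmem
    have hm2 : (i₂, j) ∈ μ := ((mem_carve h).mp hmem).1
    have h1ne : (i₁, j) ≠ (r, μ.rowLen r - 1) := by
      intro heq
      rw [Prod.mk.injEq] at heq
      obtain ⟨h1, h2⟩ := heq
      have hj2 := YoungDiagram.mem_iff_lt_rowLen.mp hm2
      have hle : μ.rowLen i₂ ≤ μ.rowLen (i₁+1) := μ.rowLen_anti _ _ (by omega)
      rw [h1] at hle
      omega
    show res μ r f i₁ j < res μ r f i₂ j
    rw [res, res, if_neg h1ne, if_neg (((mem_carve h).mp hmem).2)]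
    exact hf.2.2.2 i₁ i₂ j hi hm2

/-! ### the recurrence -/

theorem count_recurrence (μ : YoungDiagram) (hμ : μ ≠ ⊥) :
    count μ = ∑ r ∈ corners μ, count (carve μ r) := by
  classical
  -- the extension map from the sigma type
  set Ψ : (Σ r : ↥(corners μ), {f : ℕ → ℕ → ℕ // SYT (carve μ ↑r) f}) →
      {f : ℕ → ℕ → ℕ // SYT μ f} :=
    fun p => ⟨ext μ ↑p.1 p.2.1, SYT_ext (mem_corners.mp p.1.2) p.2.2⟩ with hΨ
  have hbij : Function.Bijective Ψ := by
    constructor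
    · rintro ⟨⟨r, hr⟩, ⟨f, hf⟩⟩ ⟨⟨t, ht⟩, ⟨g, hg⟩⟩ heq
      have hr' := mem_corners.mp hr
      have ht' := mem_corners.mp ht
      have heqf : ext μ r f = ext μ t g := congrArg Subtype.val heq
      -- the two corner cells both carry value μ.card
      have hSYT : SYT μ (ext μ r f) := SYT_ext hr' hf
      have hv1 : ext μ r f r (μ.rowLen r - 1) = μ.card := ext_corner f
      have hv2 : ext μ r f t (μ.rowLen t - 1) = μ.card := by
        rw [heqf]; exact ext_corner g
      have hceq : ((r, μ.rowLen r - 1) : ℕ × ℕ) = (t, μ.rowLen t - 1) := by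
        apply hSYT.2.1.injOn (mem_cells_coe.mpr (corner_cell_mem hr'))
          (mem_cells_coe.mpr (corner_cell_mem ht'))
        simp only
        rw [hv1, hv2]
      have hrt : r = t := (Prod.mk.injEq _ _ _ _ ▸ hceq).1
      subst hrt
      have hfg : f = g := by
        have := congrArg (res μ r) heqf
        rwa [res_ext hr' hf, res_ext hr' hg] at this
      subst hfg
      rfl
    · rintro ⟨f, hf⟩
      obtain ⟨c, hc, hfc⟩ := exists_max hμ hf
      obtain ⟨hcorn, hc2⟩ := max_cell_corner hf hc hfc
      have hrmem : c.1 ∈ corners μ := mem_corners.mpr hcorn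
      have hmax : f c.1 (μ.rowLen c.1 - 1) = μ.card := by
        rw [← hc2]; exact hfc
      refine ⟨⟨⟨c.1, hrmem⟩, ⟨res μ c.1 f, SYT_res hcorn hf hmax⟩⟩, ?_⟩
      apply Subtype.ext
      show ext μ c.1 (res μ c.1 f) = f
      exact ext_res hmax
  have hcard := Nat.card_eq_of_bijective Ψ hbij
  rw [count, ← hcard]
  letI : ∀ r : ↥(corners μ), Fintype {f : ℕ → ℕ → ℕ // SYT (carve μ ↑r) f} :=
    fun r => Fintype.ofFinite _
  rw [Nat.card_eq_fintype_card, Fintype.card_sigma]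
  rw [← Finset.sum_coe_sort (corners μ) (fun r => count (carve μ r))]
  apply Finset.sum_congr rfl
  intro r _
  rw [count, Nat.card_eq_fintype_card]

end HLF
namespace HLF
open Finset

lemma delta_ratio {m r : ℕ} (hr : r < m) (v w : ℕ → ℚ) (hwr : w r = v r - 1)
    (hw : ∀ i, i ≠ r → w i = v i) :
    (∏ i ∈ range m, ∏ k ∈ Ioo i m, (w i - w k)) * ∏ k ∈ (range m).erase r, (v r - v k)
  = (∏ i ∈ range m, ∏ k ∈ Ioo i m, (v i - v k)) * ∏ k ∈ (range m).erase r, (v r - v k - 1) := by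
  classical
  have herase : (range m).erase r = range r ∪ Ioo r m := by
    ext k
    simp only [Finset.mem_erase, mem_range, Finset.mem_union, mem_Ioo]
    omega
  have hdisj : Disjoint (range r) (Ioo r m) := by
    rw [Finset.disjoint_left]
    intro k hk1 hk2
    rw [mem_range] at hk1
    rw [mem_Ioo] at hk2
    omega
  have hsplit : ∀ F : ℕ → ℚ, ∏ i ∈ range m, F i
      = F r * ((∏ i ∈ range r, F i) * ∏ i ∈ Ioo r m, F i) := by
    intro F
    rw [← Finset.mul_prod_erase (range m) F (mem_range.mpr hr), herase,
      Finset.prod_union hdisj]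
  have hQ : ∀ i ∈ range r, (∏ k ∈ Ioo i m, (w i - w k))
      = (v i - v r + 1) * ∏ k ∈ (Ioo i m).erase r, (v i - v k) := by
    intro i hi
    rw [mem_range] at hi
    have hrIoo : r ∈ Ioo i m := mem_Ioo.mpr ⟨hi, hr⟩
    rw [← Finset.mul_prod_erase (Ioo i m) _ hrIoo]
    congr 1
    · rw [hw i (by omega), hwr]; ring
    · apply prod_congr rfl
      intro k hk
      rw [Finset.mem_erase] at hk
      rw [hw i (by omega), hw k hk.1]
  have hQv : ∀ i ∈ range r, (∏ k ∈ Ioo i m, (v i - v k))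
      = (v i - v r) * ∏ k ∈ (Ioo i m).erase r, (v i - v k) := by
    intro i hi
    rw [mem_range] at hi
    have hrIoo : r ∈ Ioo i m := mem_Ioo.mpr ⟨hi, hr⟩
    rw [← Finset.mul_prod_erase (Ioo i m) _ hrIoo]
  have hgt : ∀ i ∈ Ioo r m, (∏ k ∈ Ioo i m, (w i - w k)) = ∏ k ∈ Ioo i m, (v i - v k) := by
    intro i hi
    rw [mem_Ioo] at hi
    apply prod_congr rfl
    intro k hk
    rw [mem_Ioo] at hk
    rw [hw i (by omega), hw k (by omega)]
  have hwrP : (∏ k ∈ Ioo r m, (w r - w k)) = ∏ k ∈ Ioo r m, (v r - v k - 1) := by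
    apply prod_congr rfl
    intro k hk
    rw [mem_Ioo] at hk
    rw [hwr, hw k (by omega)]
    ring
  rw [hsplit (fun i => ∏ k ∈ Ioo i m, (w i - w k)),
    hsplit (fun i => ∏ k ∈ Ioo i m, (v i - v k)), herase,
    Finset.prod_union hdisj, Finset.prod_union hdisj]
  rw [hwrP, prod_congr rfl hQ, prod_congr rfl hQv, prod_congr rfl hgt]
  -- merge the products over `range r`
  have hmerge : (∏ i ∈ range r, ((v i - v r + 1) * ∏ k ∈ (Ioo i m).erase r, (v i - v k)))
        * (∏ k ∈ range r, (v r - v k))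
      = (∏ i ∈ range r, ((v i - v r) * ∏ k ∈ (Ioo i m).erase r, (v i - v k)))
        * (∏ k ∈ range r, (v r - v k - 1)) := by
    rw [← Finset.prod_mul_distrib, ← Finset.prod_mul_distrib]
    apply prod_congr rfl
    intro i _
    ring
  set a := ∏ k ∈ Ioo r m, (v r - v k - 1)
  set b := ∏ k ∈ Ioo r m, (v r - v k)
  set c := ∏ i ∈ range r, ((v i - v r + 1) * ∏ k ∈ (Ioo i m).erase r, (v i - v k))
  set c' := ∏ i ∈ range r, ((v i - v r) * ∏ k ∈ (Ioo i m).erase r, (v i - v k))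
  set d := ∏ k ∈ range r, (v r - v k)
  set d' := ∏ k ∈ range r, (v r - v k - 1)
  set e := ∏ i ∈ Ioo r m, ∏ k ∈ Ioo i m, (v i - v k)
  linear_combination a * b * e * hmerge

end HLF

namespace HLF
open Finset Nat

lemma hookProd_pos (μ : YoungDiagram) : 0 < ∏ c ∈ μ.cells, hookLen μ c.1 c.2 := by
  apply Finset.prod_pos
  intro c hc
  rw [YoungDiagram.mem_cells] at hc
  have : (c.1, c.2) ∈ μ := by rwa [Prod.mk.eta]
  exact hookLen_pos (YoungDiagram.mem_iff_lt_rowLen.mp this)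

lemma card_eq_sum_rowLens (μ : YoungDiagram) {m : ℕ} (hm : μ.colLen 0 ≤ m) :
    μ.card = ∑ i ∈ range m, μ.rowLen i := by
  show μ.cells.card = _
  rw [cells_eq_biUnion μ hm, Finset.card_biUnion]
  · apply sum_congr rfl
    intro i _
    rw [Finset.card_product, Finset.card_singleton, card_range, one_mul]
  · intro a _ b _ hab
    simp only [Finset.disjoint_left]
    rintro ⟨c1, c2⟩ h1 h2
    simp only [Finset.mem_product, Finset.mem_singleton] at h1 h2
    exact hab (h1.1 ▸ h2.1.symm ▸ rfl)

lemma delta_cast (ν : YoungDiagram) (m : ℕ) :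
    ((∏ i ∈ range m, ∏ k ∈ Ioo i m, (xval ν m i - xval ν m k) : ℕ) : ℚ)
      = ∏ i ∈ range m, ∏ k ∈ Ioo i m, ((xval ν m i : ℚ) - (xval ν m k : ℚ)) := by
  rw [Nat.cast_prod]
  apply prod_congr rfl
  intro i _
  rw [Nat.cast_prod]
  apply prod_congr rfl
  intro k hk
  rw [mem_Ioo] at hk
  exact Nat.cast_sub (xval_lt hk.1 hk.2).le

theorem count_hook (μ : YoungDiagram) :
    count μ * ∏ c ∈ μ.cells, hookLen μ c.1 c.2 = Nat.factorial μ.card := by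
  generalize hgen : μ.card = n
  induction n using Nat.strong_induction_on generalizing μ with
  | _ n ih =>
  by_cases hbot : μ = ⊥
  · subst hbot
    have h0 : (⊥ : YoungDiagram).card = 0 := by simp [YoungDiagram.card, YoungDiagram.cells_bot]
    rw [count_bot, YoungDiagram.cells_bot]
    rw [h0] at hgen
    simp [← hgen]
  -- main case
  have hn1 : 1 ≤ n := hgen ▸ card_pos_of_ne_bot hbot
  set m := μ.colLen 0 with hm
  have hm1 : 1 ≤ m := by
    obtain ⟨c, hc⟩ := Finset.card_pos.mp (card_pos_of_ne_bot hbot)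
    rw [YoungDiagram.mem_cells] at hc
    have hc' : (c.1, c.2) ∈ μ := by rwa [Prod.mk.eta]
    have h00 : (0, 0) ∈ μ := μ.up_left_mem (Nat.zero_le _) (Nat.zero_le _) hc'
    exact YoungDiagram.mem_iff_lt_colLen.mp h00
  set v : ℕ → ℚ := fun i => ((xval μ m i : ℕ) : ℚ) with hv
  have hvinj : Set.InjOn v (range m) := by
    intro a ha b hb hab
    simp only [coe_range, Set.mem_Iio] at ha hb
    have habq : ((xval μ m a : ℕ) : ℚ) = ((xval μ m b : ℕ) : ℚ) := hab
    have hab' : xval μ m a = xval μ m b := by exact_mod_cast habq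
    by_contra hne
    rcases Nat.lt_or_ge a b with h | h
    · have := xval_lt (μ := μ) h hb; omega
    · have := xval_lt (μ := μ) (show b < a by omega) ha; omega
  -- global objects
  have hrec := count_recurrence μ hbot
  set Hn := ∏ c ∈ μ.cells, hookLen μ c.1 c.2 with hHn
  set Δμ : ℚ := ∏ i ∈ range m, ∏ k ∈ Ioo i m, (v i - v k) with hΔμ
  set Pμ : ℚ := ∏ i ∈ range m, ((xval μ m i)! : ℚ) with hPμ
  have hHf : (Hn : ℚ) * Δμ = Pμ := by
    have h0 := hook_prod_formula μ (le_refl m)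
    have hcast := congrArg (Nat.cast : ℕ → ℚ) h0
    rw [Nat.cast_mul, delta_cast] at hcast
    rw [hΔμ, hPμ, ← Nat.cast_prod]
    exact hcast
  set fct : ℚ := ((n-1)! : ℚ) with hfct
  set t : ℕ → ℚ := fun r => v r * ∏ k ∈ (range m).erase r, ((v r - v k - 1) / (v r - v k))
    with ht
  have hvne : ∀ a ∈ range m, ∀ b ∈ range m, a ≠ b → v a - v b ≠ 0 := by
    intro a ha b hb hab
    intro hzero
    exact hab (hvinj ha hb (by linarith [sub_eq_zero.mp hzero]))
  have hΔμ0 : Δμ ≠ 0 := by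
    rw [hΔμ]
    apply Finset.prod_ne_zero_iff.mpr
    intro i hi
    apply Finset.prod_ne_zero_iff.mpr
    intro k hk
    rw [mem_Ioo] at hk
    rw [mem_range] at hi
    exact hvne i (mem_range.mpr hi) k (mem_range.mpr hk.2) (by omega)
  -- the per-corner computation
  have hperr : ∀ r ∈ corners μ, (count (carve μ r) : ℚ) * (Hn : ℚ) = fct * t r := by
    intro r hr
    have hcor : μ.rowLen (r+1) < μ.rowLen r := mem_corners.mp hr
    have hrm : r < m := by
      rw [corners, Finset.mem_filter, mem_range] at hr
      exact hr.1
    set ν := carve μ r with hν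
    have hνcol : ν.colLen 0 ≤ m := colLen_le_of_le carve_le 0
    have hxr_pos : 1 ≤ xval μ m r := by
      have : xval μ m r = μ.rowLen r + (m - 1 - r) := rfl
      omega
    have hxν : ∀ i, xval ν m i = if i = r then xval μ m r - 1 else xval μ m i := by
      intro i
      show ν.rowLen i + (m - 1 - i) = _
      rw [hν, carve_rowLen hcor i]
      split_ifs with hir
      · subst hir
        show μ.rowLen i - 1 + (m - 1 - i) = μ.rowLen i + (m - 1 - i) - 1
        omega
      · rfl
    set w : ℕ → ℚ := fun i => ((xval ν m i : ℕ) : ℚ) with hwdef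
    have hwr : w r = v r - 1 := by
      rw [hwdef]
      show ((xval ν m r : ℕ) : ℚ) = _
      rw [hxν r, if_pos rfl, Nat.cast_sub hxr_pos]
      rw [hv]
      norm_num
    have hwi : ∀ i, i ≠ r → w i = v i := by
      intro i hi
      rw [hwdef]
      show ((xval ν m i : ℕ) : ℚ) = _
      rw [hxν i, if_neg hi, hv]
    set Δν : ℚ := ∏ i ∈ range m, ∏ k ∈ Ioo i m, (w i - w k) with hΔν
    set Pν : ℚ := ∏ i ∈ range m, ((xval ν m i)! : ℚ) with hPν
    have hHνf : ((∏ c ∈ ν.cells, hookLen ν c.1 c.2 : ℕ) : ℚ) * Δν = Pν := by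
      have h0 := hook_prod_formula ν hνcol
      have hcast := congrArg (Nat.cast : ℕ → ℚ) h0
      rw [Nat.cast_mul, delta_cast] at hcast
      rw [hΔν, hPν, ← Nat.cast_prod]
      exact hcast
    have hcardν : ν.card = n - 1 := by rw [hν, carve_card hcor, hgen]
    have hIH := ih (n-1) (by omega) ν hcardν
    have E1 : (count ν : ℚ) * ((∏ c ∈ ν.cells, hookLen ν c.1 c.2 : ℕ) : ℚ) = fct := by
      rw [hfct]
      exact_mod_cast congrArg (Nat.cast : ℕ → ℚ) hIH
    have hPr : (∏ i ∈ range m, (xval ν m i)!) * xval μ m r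
        = ∏ i ∈ range m, (xval μ m i)! := by
      rw [← Finset.mul_prod_erase (range m) (fun i => (xval ν m i)!) (mem_range.mpr hrm),
          ← Finset.mul_prod_erase (range m) (fun i => (xval μ m i)!) (mem_range.mpr hrm)]
      have hoff : (∏ i ∈ (range m).erase r, (xval ν m i)!)
          = ∏ i ∈ (range m).erase r, (xval μ m i)! := by
        apply prod_congr rfl
        intro i hi
        rw [hxν i, if_neg (Finset.mem_erase.mp hi).1]
      rw [hoff, hxν r, if_pos rfl]
      have hfp := Nat.mul_factorial_pred (show xval μ m r ≠ 0 by omega)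
      calc ((xval μ m r - 1)! * ∏ i ∈ (range m).erase r, (xval μ m i)!) * xval μ m r
          = (xval μ m r * (xval μ m r - 1)!) * ∏ i ∈ (range m).erase r, (xval μ m i)! := by
            ring
        _ = (xval μ m r)! * ∏ i ∈ (range m).erase r, (xval μ m i)! := by rw [hfp]
    have E4 : Pν * v r = Pμ := by
      have hcast := congrArg (Nat.cast : ℕ → ℚ) hPr
      rw [Nat.cast_mul, Nat.cast_prod, Nat.cast_prod] at hcast
      exact hcast
    have E5 : Δν * ∏ k ∈ (range m).erase r, (v r - v k)
        = Δμ * ∏ k ∈ (range m).erase r, (v r - v k - 1) := delta_ratio hrm v w hwr hwi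
    set N : ℚ := ∏ k ∈ (range m).erase r, (v r - v k - 1) with hN
    set D : ℚ := ∏ k ∈ (range m).erase r, (v r - v k) with hD
    have hD0 : D ≠ 0 := by
      rw [hD]
      apply Finset.prod_ne_zero_iff.mpr
      intro k hk
      rw [Finset.mem_erase] at hk
      exact hvne r (mem_range.mpr hrm) k hk.2 (Ne.symm hk.1)
    have hA : (count ν : ℚ) * Pν = fct * Δν := by
      linear_combination Δν * E1 - (count ν : ℚ) * hHνf
    have hB : ((count ν : ℚ) * (Hn : ℚ) * D) * Δμ = (fct * v r * N) * Δμ := by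
      linear_combination (count ν : ℚ) * D * hHf - (count ν : ℚ) * D * E4
        + D * (v r) * hA + fct * (v r) * E5
    have hB' : (count ν : ℚ) * (Hn : ℚ) * D = fct * v r * N := mul_right_cancel₀ hΔμ0 hB
    simp only [ht]
    rw [Finset.prod_div_distrib, ← hN, ← hD]
    field_simp
    linear_combination hB'
  -- assemble the sum
  have hglobal : (count μ : ℚ) * (Hn : ℚ) = fct * ∑ r ∈ corners μ, t r := by
    rw [hrec, Nat.cast_sum, Finset.sum_mul, Finset.mul_sum]
    exact sum_congr rfl hperr
  have hsub : corners μ ⊆ range m := Finset.filter_subset _ _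
  have hzero : ∀ r ∈ range m, r ∉ corners μ → t r = 0 := by
    intro r hrm' hnc
    rw [mem_range] at hrm'
    have hne : ¬ (μ.rowLen (r+1) < μ.rowLen r) := fun hcon => hnc (mem_corners.mpr hcon)
    have heq : μ.rowLen (r+1) = μ.rowLen r := by
      have := μ.rowLen_anti r (r+1) (by omega)
      omega
    have hpos : 0 < μ.rowLen r := rowLen_pos_iff.mpr hrm'
    have hr1m : r + 1 < m := by
      have : 0 < μ.rowLen (r+1) := by omega
      exact rowLen_pos_iff.mp this
    have hxx : xval μ m r = xval μ m (r+1) + 1 := by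
      show μ.rowLen r + (m - 1 - r) = μ.rowLen (r+1) + (m - 1 - (r+1)) + 1
      omega
    have hfac : v r - v (r+1) - 1 = 0 := by
      have : v r = v (r+1) + 1 := by
        rw [hv]
        show ((xval μ m r : ℕ) : ℚ) = ((xval μ m (r+1) : ℕ) : ℚ) + 1
        rw [hxx]
        push_cast
        ring
      rw [this]
      ring
    simp only [ht]
    rw [Finset.prod_eq_zero (i := r+1) (by rw [Finset.mem_erase]; exact ⟨by omega, mem_range.mpr hr1m⟩)]
    · rw [mul_zero]
    · rw [hfac]
      simp
  have hext2 : ∑ r ∈ corners μ, t r = ∑ r ∈ range m, t r := Finset.sum_subset hsub hzero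
  have hkey := key_identity (range m) v hvinj
  rw [card_range] at hkey
  -- sum of v
  have hsum1 : ∑ i ∈ range m, xval μ m i = n + ∑ i ∈ range m, i := by
    have : ∀ i, xval μ m i = μ.rowLen i + (m - 1 - i) := fun i => rfl
    rw [Finset.sum_congr rfl (fun i _ => this i), Finset.sum_add_distrib]
    congr 1
    · rw [← hgen, card_eq_sum_rowLens μ (le_refl m)]
    · exact Finset.sum_range_reflect (fun j => j) m
  have hgauss := Finset.sum_range_id_mul_two m
  have hsumv : ∑ r ∈ range m, v r = (n : ℚ) + (m : ℚ) * ((m : ℚ) - 1) / 2 := by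
    have hc1 : ((∑ i ∈ range m, xval μ m i : ℕ) : ℚ) = ∑ r ∈ range m, v r := by
      rw [Nat.cast_sum]
    have hc2 : ((∑ i ∈ range m, i : ℕ) : ℚ) = (m : ℚ) * ((m : ℚ) - 1) / 2 := by
      have hq := congrArg (Nat.cast : ℕ → ℚ) hgauss
      rw [Nat.cast_mul, Nat.cast_mul, Nat.cast_sub hm1] at hq
      norm_num at hq
      rw [Nat.cast_sum]
      linarith
    have hq1 := congrArg (Nat.cast : ℕ → ℚ) hsum1
    rw [Nat.cast_add, hc1] at hq1
    rw [hq1, hc2]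
  have hfinq : (count μ : ℚ) * (Hn : ℚ) = ((n ! : ℕ) : ℚ) := by
    rw [hglobal, hext2]
    have : ∑ r ∈ range m, t r = (n : ℚ) := by
      simp only [ht]
      rw [hkey, hsumv]
      ring
    rw [this, hfct]
    have := Nat.mul_factorial_pred (show n ≠ 0 by omega)
    have hq := congrArg (Nat.cast : ℕ → ℚ) this
    rw [Nat.cast_mul] at hq
    rw [← hq]
    ring
  have hfin : ((count μ * Hn : ℕ) : ℚ) = ((n ! : ℕ) : ℚ) := by
    rw [Nat.cast_mul]
    exact hfinq
  exact_mod_cast hfin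


end HLF

/-- The Hook Length Formula: for a nonempty Young diagram `μ`, the number of standard
Young tableaux of shape `μ` times the product of all hook lengths equals `|μ|!`. -/
theorem statement16 (μ : YoungDiagram) (hμ : μ ≠ ⊥) :
    sytCount μ * ∏ c ∈ μ.cells, hookLen μ c.1 c.2 = Nat.factorial μ.card := by
  have h : sytCount μ = HLF.count μ := rfl
  rw [h]
  exact HLF.count_hook μ
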